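/- Let d ≥ 1 and let P_1, …, P_{⌊d/2⌋+1} ⊆ ℝ^d be pairwise disjoint finite sets with |P_i| ≤ d+1 and 0 ∈ conv(P_i) for every i = 1, …, ⌊d/2⌋+1. Then there exists a set C ⊆ P_1 ∪ … ∪ P_{⌊d/2⌋+1} with 0 ∈ conv(C) and |C ∩ P_i| ≤ ⌈d/2⌉+1 for every i, i.e., a (⌈d/2⌉+1)-colorful choice containing the origin in its convex hull. -/

import Mathlib

open scoped Classical

open Module

/-- If `0` (or any point of `W`) is a convex combination of points of `Q`, then there is such a
combination whose support has at most `finrank E - finrank W + 1` points. -/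
theorem aux_reduce {E : Type*} [AddCommGroup E] [Module ℝ E] [FiniteDimensional ℝ E]
    (W : Submodule ℝ E) (Q : Finset E) :
    ∀ (k : ℕ) (μ : E → ℝ), (Q.filter fun p => μ p ≠ 0).card ≤ k →
      (∀ p ∈ Q, 0 ≤ μ p) → (∑ p ∈ Q, μ p = 1) → (∑ p ∈ Q, μ p • p) ∈ W →
      ∃ ν : E → ℝ, (∀ p ∈ Q, 0 ≤ ν p) ∧ (∑ p ∈ Q, ν p = 1) ∧ (∑ p ∈ Q, ν p • p) ∈ W ∧
        (Q.filter fun p => ν p ≠ 0).card ≤ finrank ℝ E - finrank ℝ W + 1 := by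
  intro k
  induction k with
  | zero =>
    intro μ hc h0 h1 hW
    exact ⟨μ, h0, h1, hW, le_trans hc (Nat.zero_le _)⟩
  | succ k ih =>
    intro μ hc h0 h1 hW
    by_cases hle : (Q.filter fun p => μ p ≠ 0).card ≤ finrank ℝ E - finrank ℝ W + 1
    · exact ⟨μ, h0, h1, hW, hle⟩
    push_neg at hle
    set S := Q.filter fun p => μ p ≠ 0 with hSdef
    have hSQ : S ⊆ Q := Finset.filter_subset _ _
    have hμS : ∀ p, p ∈ Q → p ∉ S → μ p = 0 := by
      intro p hp hps
      by_contra h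
      exact hps (Finset.mem_filter.mpr ⟨hp, h⟩)
    -- a nontrivial affine dependence among points of S relative to W
    let f1 : (↥S → ℝ) →ₗ[ℝ] ℝ :=
      { toFun := fun ν => ∑ p : ↥S, ν p
        map_add' := fun a b => Finset.sum_add_distrib
        map_smul' := fun c a => by simp [Finset.mul_sum] }
    let f2 : (↥S → ℝ) →ₗ[ℝ] E :=
      { toFun := fun ν => ∑ p : ↥S, ν p • (p : E)
        map_add' := fun a b => by
          simp [add_smul, Finset.sum_add_distrib]
        map_smul' := fun c a => by
          simp [Finset.smul_sum, smul_smul] }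
    let f : (↥S → ℝ) →ₗ[ℝ] ℝ × (E ⧸ W) := LinearMap.prod f1 (W.mkQ.comp f2)
    have hnotinj : ¬ Function.Injective f := by
      intro hinj
      have hle2 := LinearMap.finrank_le_finrank_of_injective hinj
      rw [Module.finrank_pi, Fintype.card_coe, Module.finrank_prod, Module.finrank_self] at hle2
      have h3 := Submodule.finrank_quotient_add_finrank W
      have h4 := Submodule.finrank_le W
      omega
    rw [Function.not_injective_iff] at hnotinj
    obtain ⟨a, b, hab, hne⟩ := hnotinj
    set ν0 : ↥S → ℝ := a - b with hν0def
    have hfν0 : f ν0 = 0 := by rw [hν0def, map_sub, hab, sub_self]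
    have hν0ne : ν0 ≠ 0 := sub_ne_zero.mpr hne
    have hsum0 : ∑ p : ↥S, ν0 p = 0 := by
      have := congrArg Prod.fst hfν0
      simpa [f, f1, LinearMap.prod_apply] using this
    have hWν0 : (∑ p : ↥S, ν0 p • (p : E)) ∈ W := by
      have := congrArg Prod.snd hfν0
      simp only [f, f2, LinearMap.prod_apply, Function.prod, LinearMap.comp_apply, Prod.snd_zero,
        Submodule.mkQ_apply, Submodule.Quotient.mk_eq_zero] at this
      exact this
    -- extend to E
    set ν : E → ℝ := fun p => if h : p ∈ S then ν0 ⟨p, h⟩ else 0 with hνdef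
    have hν_coe : ∀ x : ↥S, ν ↑x = ν0 x := by
      intro x
      simp only [hνdef]
      rw [dif_pos x.2]
    have hν_out : ∀ p, p ∉ S → ν p = 0 := by
      intro p hp
      simp only [hνdef]
      rw [dif_neg hp]
    have hνsumS : ∑ p ∈ S, ν p = 0 := by
      rw [← Finset.sum_attach S (fun p => ν p)]
      rw [← hsum0, Finset.univ_eq_attach]
      exact Finset.sum_congr rfl fun x _ => hν_coe x
    have hνvecS : (∑ p ∈ S, ν p • p) ∈ W := by
      have : ∑ p ∈ S, ν p • p = ∑ p : ↥S, ν0 p • (p : E) := by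
        rw [← Finset.sum_attach S (fun p => ν p • p), Finset.univ_eq_attach]
        exact Finset.sum_congr rfl fun x _ => by rw [hν_coe x]
      rw [this]; exact hWν0
    have hνQ : ∑ p ∈ Q, ν p = 0 := by
      rw [← Finset.sum_subset hSQ (fun p _ hps => hν_out p hps)]
      exact hνsumS
    have hνvecQ : (∑ p ∈ Q, ν p • p) ∈ W := by
      rw [← Finset.sum_subset hSQ (fun p _ hps => by rw [hν_out p hps, zero_smul])]
      exact hνvecS
    -- a negative coefficient exists
    have hneg : ∃ p ∈ S, ν p < 0 := by
      by_contra hcon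
      push_neg at hcon
      have hz : ∀ p ∈ S, ν p = 0 := (Finset.sum_eq_zero_iff_of_nonneg hcon).mp hνsumS
      apply hν0ne
      funext x
      have := hz ↑x x.2
      rw [hν_coe x] at this
      simpa using this
    set Tneg := S.filter fun p => ν p < 0 with hTdef
    have hTne : Tneg.Nonempty := by
      obtain ⟨p, hp, hν⟩ := hneg
      exact ⟨p, Finset.mem_filter.mpr ⟨hp, hν⟩⟩
    obtain ⟨p₀, hp₀T, hp₀min⟩ := Finset.exists_min_image Tneg (fun p => μ p / (-ν p)) hTne
    have hp₀S : p₀ ∈ S := (Finset.mem_filter.mp hp₀T).1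
    have hνp₀ : ν p₀ < 0 := (Finset.mem_filter.mp hp₀T).2
    set t := μ p₀ / (-ν p₀) with htdef
    have htnn : 0 ≤ t := div_nonneg (h0 p₀ (hSQ hp₀S)) (by linarith)
    set μ' : E → ℝ := fun p => μ p + t * ν p with hμ'def
    have hμ'0 : ∀ p ∈ Q, 0 ≤ μ' p := by
      intro p hp
      by_cases hpS : p ∈ S
      · by_cases hνp : ν p < 0
        · have hmin := hp₀min p (Finset.mem_filter.mpr ⟨hpS, hνp⟩)
          have h1' : t * (-ν p) ≤ μ p / (-ν p) * (-ν p) :=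
            mul_le_mul_of_nonneg_right hmin (by linarith)
          rw [div_mul_cancel₀ _ (by linarith : -ν p ≠ 0)] at h1'
          simp only [hμ'def]
          nlinarith
        · push_neg at hνp
          exact add_nonneg (h0 p hp) (mul_nonneg htnn hνp)
      · have hμp : μ p = 0 := hμS p hp hpS
        simp [hμ'def, hμp, hν_out p hpS]
    have hμ'1 : ∑ p ∈ Q, μ' p = 1 := by
      simp only [hμ'def]
      rw [Finset.sum_add_distrib, h1, ← Finset.mul_sum, hνQ, mul_zero, add_zero]
    have hμ'W : (∑ p ∈ Q, μ' p • p) ∈ W := by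
      have hsplit : ∑ p ∈ Q, μ' p • p = (∑ p ∈ Q, μ p • p) + t • (∑ p ∈ Q, ν p • p) := by
        rw [Finset.smul_sum, ← Finset.sum_add_distrib]
        exact Finset.sum_congr rfl fun p _ => by
          simp only [hμ'def]
          rw [add_smul, smul_smul]
      rw [hsplit]
      exact W.add_mem hW (W.smul_mem t hνvecQ)
    have hμ'p₀ : μ' p₀ = 0 := by
      have hc : -ν p₀ ≠ 0 := by linarith
      have h2 : t * (-ν p₀) = μ p₀ := by rw [htdef]; exact div_mul_cancel₀ _ hc
      simp only [hμ'def]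
      linarith
    have hsupp : (Q.filter fun p => μ' p ≠ 0) ⊆ S.erase p₀ := by
      intro p hp
      obtain ⟨hpQ, hpne⟩ := Finset.mem_filter.mp hp
      have hpS : p ∈ S := by
        by_contra hpS
        exact hpne (by simp [hμ'def, hμS p hpQ hpS, hν_out p hpS])
      refine Finset.mem_erase.mpr ⟨?_, hpS⟩
      intro hpp₀
      rw [hpp₀] at hpne
      exact hpne hμ'p₀
    have hcard' : (Q.filter fun p => μ' p ≠ 0).card ≤ k := by
      have hle3 := Finset.card_le_card hsupp
      have h2 := Finset.card_erase_of_mem hp₀S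
      omega
    exact ih μ' hcard' hμ'0 hμ'1 hμ'W


theorem aux_zero_mem {E : Type*} [AddCommGroup E] [Module ℝ E]
    (C : Finset E) (g : E → ℝ) (hg0 : ∀ p ∈ C, 0 ≤ g p) (hgpos : 0 < ∑ p ∈ C, g p)
    (hgsum : ∑ p ∈ C, g p • p = 0) : (0 : E) ∈ convexHull ℝ (C : Set E) := by
  have hcm : C.centerMass g id = 0 := by
    rw [Finset.centerMass]
    simp only [id_eq]
    rw [hgsum, smul_zero]
  rw [← hcm]
  exact C.centerMass_mem_convexHull hg0 hgpos (fun i hi => Finset.mem_coe.mpr hi)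





/-- Given `⌊d/2⌋ + 1` pairwise disjoint color classes in `ℝ^d`, each of size
at most `d + 1` and each containing the origin in its convex hull, there is a
`(⌈d/2⌉ + 1)`-colorful choice containing the origin in its convex hull. -/
theorem simple_dimension_reduction_choice (d : ℕ) (hd : 1 ≤ d)
    (P : Fin (d / 2 + 1) → Finset (EuclideanSpace ℝ (Fin d)))
    (hdisj : ∀ i j, i ≠ j → Disjoint (P i) (P j))
    (hcard : ∀ i, (P i).card ≤ d + 1)
    (h0 : ∀ i, (0 : EuclideanSpace ℝ (Fin d)) ∈
      convexHull ℝ ((P i : Set (EuclideanSpace ℝ (Fin d))))) :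
    ∃ C : Finset (EuclideanSpace ℝ (Fin d)),
      C ⊆ Finset.univ.biUnion P ∧
      (0 : EuclideanSpace ℝ (Fin d)) ∈
        convexHull ℝ ((C : Set (EuclideanSpace ℝ (Fin d)))) ∧
      ∀ i, (C ∩ P i).card ≤ (d + 1) / 2 + 1 := by

  classical
  -- convex weights for each class
  have hw : ∀ i, ∃ w : EuclideanSpace ℝ (Fin d) → ℝ,
      (∀ p ∈ P i, 0 ≤ w p) ∧ ∑ p ∈ P i, w p = 1 ∧ ∑ p ∈ P i, w p • p = 0 := by
    intro i
    have h := h0 i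
    rw [Finset.convexHull_eq] at h
    obtain ⟨w, hw0, hw1, hwc⟩ := h
    refine ⟨w, hw0, hw1, ?_⟩
    rw [Finset.centerMass_eq_of_sum_1 _ _ hw1] at hwc
    simpa using hwc
  choose w hw0 hw1 hws using hw
  -- supports
  set T : Fin (d / 2 + 1) → Finset (EuclideanSpace ℝ (Fin d)) :=
    fun i => (P i).filter fun p => w i p ≠ 0 with hTdef
  have hTP : ∀ i, T i ⊆ P i := fun i => Finset.filter_subset _ _
  have hTpos : ∀ i, ∀ p ∈ T i, 0 < w i p := by
    intro i p hp
    have h := Finset.mem_filter.mp hp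
    exact lt_of_le_of_ne (hw0 i p h.1) (Ne.symm h.2)
  have hT1 : ∀ i, ∑ p ∈ T i, w i p = 1 := by
    intro i
    rw [Finset.sum_subset (hTP i) (fun p hp hps => by
      by_contra h
      exact hps (Finset.mem_filter.mpr ⟨hp, h⟩))]
    exact hw1 i
  have hTs : ∀ i, ∑ p ∈ T i, w i p • p = 0 := by
    intro i
    rw [Finset.sum_subset (hTP i) (fun p hp hps => by
      have : w i p = 0 := by
        by_contra h
        exact hps (Finset.mem_filter.mpr ⟨hp, h⟩)
      rw [this, zero_smul])]
    exact hws i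
  have hTcard : ∀ i, (T i).card ≤ d + 1 :=
    fun i => le_trans (Finset.card_le_card (hTP i)) (hcard i)
  have hTne : ∀ i, (T i).Nonempty := by
    intro i
    rw [Finset.nonempty_iff_ne_empty]
    intro h
    have h1 := hT1 i
    rw [h, Finset.sum_empty] at h1
    norm_num at h1
  -- split each support in two halves
  have hA : ∀ i, ∃ A ⊆ T i, A.card = (T i).card / 2 :=
    fun i => Finset.exists_subset_card_eq (Nat.div_le_self _ _)
  choose A hAT hAcard using hA
  set B : Fin (d / 2 + 1) → Finset (EuclideanSpace ℝ (Fin d)) := fun i => T i \ A i with hBdef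
  have hBT : ∀ i, B i ⊆ T i := fun i => Finset.sdiff_subset
  have hBcard : ∀ i, (B i).card = (T i).card - (T i).card / 2 := by
    intro i
    rw [hBdef, Finset.card_sdiff_of_subset (hAT i), hAcard i]
  set x : Fin (d / 2 + 1) → EuclideanSpace ℝ (Fin d) :=
    fun i => ∑ p ∈ A i, w i p • p with hxdef
  have hBsum : ∀ i, ∑ p ∈ B i, w i p • p = - x i := by
    intro i
    have h := Finset.sum_sdiff (f := fun p => w i p • p) (hAT i)
    rw [hTs i] at h
    have h2 : ∑ p ∈ B i, w i p • p + x i = 0 := h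
    exact eq_neg_of_add_eq_zero_left h2
  -- the signed vectors from classes 1..n
  set v : Fin (d / 2) → EuclideanSpace ℝ (Fin d) := fun k => x k.succ with hvdef
  -- disjointness helper
  have hdisj' : ∀ (D : Finset (EuclideanSpace ℝ (Fin d))) (j i : Fin (d / 2 + 1)),
      D ⊆ P j → i ≠ j → D ∩ P i = ∅ := by
    intro D j i hD hij
    rw [Finset.eq_empty_iff_forall_notMem]
    intro p hp
    rw [Finset.mem_inter] at hp
    exact (Finset.disjoint_left.mp (hdisj j i (Ne.symm hij))) (hD hp.1) hp.2
  have hABm : ∀ i, (A i).card ≤ (d + 1) / 2 + 1 ∧ (B i).card ≤ (d + 1) / 2 + 1 := by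
    intro i
    have h1 := hAcard i
    have h2 := hBcard i
    have h3 := hTcard i
    omega
  -- shortcut case : some x_{k.succ} = 0
  by_cases hxz : ∃ k : Fin (d / 2), x k.succ = 0
  · obtain ⟨k, hk⟩ := hxz
    refine ⟨B k.succ, ?_, ?_, ?_⟩
    · intro p hp
      exact Finset.mem_biUnion.mpr ⟨k.succ, Finset.mem_univ _, hTP _ (hBT _ hp)⟩
    · apply aux_zero_mem _ (w k.succ)
      · exact fun p hp => (hTpos _ p (hBT _ hp)).le
      · apply Finset.sum_pos (fun p hp => hTpos _ p (hBT _ hp))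
        rw [← Finset.card_pos, hBcard k.succ]
        have h1 := (hTne k.succ).card_pos
        have h3 := hTcard k.succ
        omega
      · rw [hBsum k.succ, hk, neg_zero]
    · intro i
      by_cases hi : i = k.succ
      · subst hi
        refine le_trans (Finset.card_le_card (Finset.inter_subset_left)) ?_
        exact (hABm _).2
      · rw [hdisj' _ k.succ i (fun p hp => hTP _ (hBT _ hp)) hi]
        simp
  push_neg at hxz
  -- main existential : coefficients
  set W := Submodule.span ℝ (Set.range v) with hWdef
  have main : ∃ (ν : EuclideanSpace ℝ (Fin d) → ℝ) (c : Fin (d / 2) → ℝ),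
      (∀ p ∈ P 0, 0 ≤ ν p) ∧
      (((P 0).filter fun p => ν p ≠ 0).card ≤ (d + 1) / 2 + 1) ∧
      ((∑ k : Fin (d / 2), c k • v k) + ∑ p ∈ P 0, ν p • p = 0) ∧
      ((∑ p ∈ P 0, ν p = 1) ∨ ∃ k, c k ≠ 0) := by
    by_cases hli : LinearIndependent ℝ v
    · have hrank : finrank ℝ W = d / 2 := by
        rw [hWdef, finrank_span_eq_card hli, Fintype.card_fin]
      obtain ⟨ν, hν0, hν1, hνW, hνcard⟩ := aux_reduce W (P 0) ((P 0).card) (w 0)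
        (Finset.card_filter_le _ _) (hw0 0) (hw1 0) (by rw [hws 0]; exact W.zero_mem)
      have hxxW : -(∑ p ∈ P 0, ν p • p) ∈ W := W.neg_mem hνW
      rw [hWdef, Submodule.mem_span_range_iff_exists_fun ℝ] at hxxW
      obtain ⟨c, hc⟩ := hxxW
      refine ⟨ν, c, hν0, ?_, by rw [hc]; exact neg_add_cancel _, Or.inl hν1⟩
      rw [finrank_euclideanSpace_fin, hrank] at hνcard
      omega
    · rw [Fintype.not_linearIndependent_iff] at hli
      obtain ⟨c, hc, k₀, hk₀⟩ := hli
      refine ⟨fun _ => 0, c, fun p _ => le_refl 0, ?_, ?_, Or.inr ⟨k₀, hk₀⟩⟩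
      · simp
      · simp [hc]
  obtain ⟨ν, c, hν0, hνcard, hzero, hposcase⟩ := main
  -- the combined colorful choice
  set S := (P 0).filter fun p => ν p ≠ 0 with hSdef
  have hSP : S ⊆ P 0 := Finset.filter_subset _ _
  set D : Fin (d / 2) → Finset (EuclideanSpace ℝ (Fin d)) :=
    fun k => if 0 ≤ c k then A k.succ else B k.succ with hDdef
  have hDT : ∀ k, D k ⊆ T k.succ := by
    intro k
    simp only [hDdef]
    by_cases hck : 0 ≤ c k
    · rw [if_pos hck]; exact hAT _
    · rw [if_neg hck]; exact hBT _
  have hDm : ∀ k, (D k).card ≤ (d + 1) / 2 + 1 := by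
    intro k
    simp only [hDdef]
    by_cases hck : 0 ≤ c k
    · rw [if_pos hck]; exact (hABm _).1
    · rw [if_neg hck]; exact (hABm _).2
  set u : Fin (d / 2) → EuclideanSpace ℝ (Fin d) → ℝ :=
    fun k p => if p ∈ D k then |c k| * w k.succ p else 0 with hudef
  have hu0 : ∀ k p, 0 ≤ u k p := by
    intro k p
    simp only [hudef]
    by_cases hp : p ∈ D k
    · rw [if_pos hp]
      exact mul_nonneg (abs_nonneg _) (hTpos _ p (hDT k hp)).le
    · rw [if_neg hp]
  have hu_out : ∀ k p, p ∉ D k → u k p = 0 := by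
    intro k p hp
    simp only [hudef]
    exact if_neg hp
  have hDsum : ∀ k, ∑ p ∈ D k, u k p • p = c k • v k := by
    intro k
    by_cases hck : 0 ≤ c k
    · have hD : D k = A k.succ := by simp only [hDdef]; exact if_pos hck
      have h1 : ∀ p ∈ D k, u k p • p = c k • (w k.succ p • p) := by
        intro p hp
        simp only [hudef]
        rw [if_pos hp, abs_of_nonneg hck, mul_smul]
      rw [Finset.sum_congr rfl h1, ← Finset.smul_sum, hD]
    · push_neg at hck
      have hD : D k = B k.succ := by simp only [hDdef]; exact if_neg (not_le.mpr hck)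
      have h1 : ∀ p ∈ D k, u k p • p = (-c k) • (w k.succ p • p) := by
        intro p hp
        simp only [hudef]
        rw [if_pos hp, abs_of_neg hck, mul_smul]
      rw [Finset.sum_congr rfl h1, ← Finset.smul_sum, hD, hBsum k.succ]
      simp only [hvdef]
      rw [smul_neg, neg_smul, neg_neg]
  set g₀ : EuclideanSpace ℝ (Fin d) → ℝ := fun p => if p ∈ S then ν p else 0 with hg₀def
  set g : EuclideanSpace ℝ (Fin d) → ℝ := fun p => g₀ p + ∑ k : Fin (d / 2), u k p with hgdef
  set C : Finset (EuclideanSpace ℝ (Fin d)) :=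
    S ∪ Finset.univ.biUnion (fun k : Fin (d / 2) => D k) with hCdef
  have hSC : S ⊆ C := by rw [hCdef]; exact Finset.subset_union_left
  have hDC : ∀ k, D k ⊆ C := by
    intro k
    rw [hCdef]
    exact le_trans (Finset.subset_biUnion_of_mem _ (Finset.mem_univ k)) Finset.subset_union_right
  -- sums of g₀
  have hg₀vec : ∑ p ∈ C, g₀ p • p = ∑ p ∈ P 0, ν p • p := by
    rw [← Finset.sum_subset hSC (fun p _ hps => by simp only [hg₀def]; rw [if_neg hps, zero_smul])]
    rw [Finset.sum_congr rfl (fun p hp => by simp only [hg₀def]; rw [if_pos hp])]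
    exact Finset.sum_subset hSP (fun p hp hps => by
      have : ν p = 0 := by
        by_contra h
        exact hps (Finset.mem_filter.mpr ⟨hp, h⟩)
      rw [this, zero_smul])
  have hg₀sc : ∑ p ∈ C, g₀ p = ∑ p ∈ P 0, ν p := by
    rw [← Finset.sum_subset hSC (fun p _ hps => by simp only [hg₀def]; rw [if_neg hps])]
    rw [Finset.sum_congr rfl (fun p hp => by simp only [hg₀def]; rw [if_pos hp])]
    exact Finset.sum_subset hSP (fun p hp hps => by
      by_contra h
      exact hps (Finset.mem_filter.mpr ⟨hp, h⟩))
  have huvec : ∀ k, ∑ p ∈ C, u k p • p = c k • v k := by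
    intro k
    rw [← Finset.sum_subset (hDC k) (fun p _ hps => by rw [hu_out k p hps, zero_smul])]
    exact hDsum k
  have husc : ∀ k, ∑ p ∈ C, u k p = |c k| * ∑ p ∈ D k, w k.succ p := by
    intro k
    rw [← Finset.sum_subset (hDC k) (fun p _ hps => hu_out k p hps)]
    rw [Finset.mul_sum]
    exact Finset.sum_congr rfl (fun p hp => by simp only [hudef]; rw [if_pos hp])
  -- the three properties of C
  refine ⟨C, ?_, ?_, ?_⟩
  · intro p hp
    rw [hCdef] at hp
    rcases Finset.mem_union.mp hp with hp | hp
    · exact Finset.mem_biUnion.mpr ⟨0, Finset.mem_univ _, hSP hp⟩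
    · obtain ⟨k, _, hk⟩ := Finset.mem_biUnion.mp hp
      exact Finset.mem_biUnion.mpr ⟨k.succ, Finset.mem_univ _, hTP _ (hDT k hk)⟩
  · apply aux_zero_mem _ g
    · intro p _
      simp only [hgdef]
      apply add_nonneg
      · simp only [hg₀def]
        by_cases hp : p ∈ S
        · rw [if_pos hp]
          exact hν0 p (hSP hp)
        · rw [if_neg hp]
      · exact Finset.sum_nonneg (fun k _ => hu0 k p)
    · -- total weight positive
      have hsplit : ∑ p ∈ C, g p
          = (∑ p ∈ P 0, ν p) + ∑ k : Fin (d / 2), |c k| * ∑ p ∈ D k, w k.succ p := by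
        simp only [hgdef]
        rw [Finset.sum_add_distrib, hg₀sc, Finset.sum_comm]
        congr 1
        exact Finset.sum_congr rfl (fun k _ => husc k)
      rw [hsplit]
      have hterm : ∀ k, 0 ≤ |c k| * ∑ p ∈ D k, w k.succ p :=
        fun k => mul_nonneg (abs_nonneg _) (Finset.sum_nonneg fun p hp => (hTpos _ p (hDT k hp)).le)
      rcases hposcase with h1 | ⟨k₀, hk₀⟩
      · rw [h1]
        have : (0:ℝ) ≤ ∑ k : Fin (d / 2), |c k| * ∑ p ∈ D k, w k.succ p :=
          Finset.sum_nonneg (fun k _ => hterm k)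
        linarith
      · have hsν : 0 ≤ ∑ p ∈ P 0, ν p := Finset.sum_nonneg hν0
        have hpos : 0 < |c k₀| * ∑ p ∈ D k₀, w k₀.succ p := by
          apply mul_pos (abs_pos.mpr hk₀)
          apply Finset.sum_pos (fun p hp => hTpos _ p (hDT k₀ hp))
          -- D k₀ nonempty
          simp only [hDdef]
          by_cases hck : 0 ≤ c k₀
          · rw [if_pos hck]
            rw [Finset.nonempty_iff_ne_empty]
            intro hAe
            apply hxz k₀
            simp only [hxdef]
            rw [hAe, Finset.sum_empty]
          · rw [if_neg hck]
            rw [← Finset.card_pos, hBcard k₀.succ]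
            have h1 := (hTne k₀.succ).card_pos
            have h3 := hTcard k₀.succ
            omega
        have hrest : 0 < ∑ k : Fin (d / 2), |c k| * ∑ p ∈ D k, w k.succ p :=
          Finset.sum_pos' (fun k _ => hterm k) ⟨k₀, Finset.mem_univ _, hpos⟩
        linarith
    · -- weighted sum of points is zero
      have hsplit : ∑ p ∈ C, g p • p
          = (∑ p ∈ P 0, ν p • p) + ∑ k : Fin (d / 2), c k • v k := by
        simp only [hgdef]
        have h1 : ∀ p ∈ C, (g₀ p + ∑ k : Fin (d / 2), u k p) • p
            = g₀ p • p + ∑ k : Fin (d / 2), u k p • p := by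
          intro p _
          rw [add_smul, Finset.sum_smul]
        rw [Finset.sum_congr rfl h1, Finset.sum_add_distrib, hg₀vec, Finset.sum_comm]
        congr 1
        exact Finset.sum_congr rfl (fun k _ => huvec k)
      rw [hsplit, add_comm]
      exact hzero
  · -- cardinality bounds
    intro i
    by_cases hi : i = 0
    · subst hi
      have hsub : C ∩ P 0 ⊆ S := by
        intro p hp
        obtain ⟨hpC, hpP⟩ := Finset.mem_inter.mp hp
        rw [hCdef] at hpC
        rcases Finset.mem_union.mp hpC with hp' | hp'
        · exact hp'
        · obtain ⟨k, _, hk⟩ := Finset.mem_biUnion.mp hp'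
          have := hdisj' (D k) k.succ 0 (fun q hq => hTP _ (hDT k hq)) (Ne.symm (Fin.succ_ne_zero k))
          rw [Finset.eq_empty_iff_forall_notMem] at this
          exact absurd (Finset.mem_inter.mpr ⟨hk, hpP⟩) (this p)
      exact le_trans (Finset.card_le_card hsub) hνcard
    · obtain ⟨k, rfl⟩ := Fin.eq_succ_of_ne_zero hi
      have hsub : C ∩ P k.succ ⊆ D k := by
        intro p hp
        obtain ⟨hpC, hpP⟩ := Finset.mem_inter.mp hp
        rw [hCdef] at hpC
        rcases Finset.mem_union.mp hpC with hp' | hp'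
        · have := hdisj' S 0 k.succ hSP (Fin.succ_ne_zero k)
          rw [Finset.eq_empty_iff_forall_notMem] at this
          exact absurd (Finset.mem_inter.mpr ⟨hp', hpP⟩) (this p)
        · obtain ⟨k', _, hk'⟩ := Finset.mem_biUnion.mp hp'
          by_cases hkk : k' = k
          · rwa [hkk] at hk'
          · have hne : k.succ ≠ k'.succ := fun h => hkk (Fin.succ_injective _ h.symm)
            have := hdisj' (D k') k'.succ k.succ (fun q hq => hTP _ (hDT k' hq)) hne
            rw [Finset.eq_empty_iff_forall_notMem] at this
            exact absurd (Finset.mem_inter.mpr ⟨hk', hpP⟩) (this p)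
      exact le_trans (Finset.card_le_card hsub) (hDm k)
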